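/- Let σ > 0, T ≥ 1, and σ₁, …, σ_T ∈ (0, 1]. Define C₁' = 2 / log(1 + σ⁻²) and Γ_T = (1/2)·Σ_{t=1}^T log(1 + σ⁻²·σ_t²). Then Σ_{t=1}^T σ_t ≤ √(C₁' · T · Γ_T). -/

import Mathlib

lemma log_concave_aux (c x : ℝ) (hc : 0 < c) (hx0 : 0 < x) (hx1 : x ≤ 1) :
    x * Real.log (1 + c) ≤ Real.log (1 + c * x) := by
  have h := strictConcaveOn_log_Ioi.concaveOn.2 (Set.mem_Ioi.2 one_pos)
    (Set.mem_Ioi.2 (by linarith : (0:ℝ) < 1 + c)) (by linarith : 0 ≤ 1 - x)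
    hx0.le (by ring)
  simp only [smul_eq_mul, Real.log_one, mul_zero, zero_add] at h
  have : (1 - x) * 1 + x * (1 + c) = 1 + c * x := by ring
  rw [this] at h
  linarith

/-- `Σ_{t=1}^T σ_t ≤ √(C₁' T Γ_T)` with `C₁' = 2/log(1+σ⁻²)` and
`Γ_T = (1/2) Σ_t log (1 + σ⁻² σ_t²)`. -/
theorem stmt_9 (σ : ℝ) (hσ : 0 < σ) (T : ℕ) (hT : 1 ≤ T)
    (sig : ℕ → ℝ) (hsig : ∀ t ∈ Finset.Icc 1 T, sig t ∈ Set.Ioc (0 : ℝ) 1) :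
    ∑ t ∈ Finset.Icc 1 T, sig t ≤
      Real.sqrt ((2 / Real.log (1 + 1 / σ ^ 2)) * T *
        ((1 / 2) * ∑ t ∈ Finset.Icc 1 T, Real.log (1 + (1 / σ ^ 2) * sig t ^ 2))) := by
  set c : ℝ := 1 / σ ^ 2 with hc
  have hcpos : 0 < c := by positivity
  have hlogpos : 0 < Real.log (1 + c) := Real.log_pos (by linarith)
  -- pointwise: sig t ^ 2 ≤ log(1 + c * sig t ^2) / log (1+c)
  have key : ∀ t ∈ Finset.Icc 1 T, sig t ^ 2 * Real.log (1 + c) ≤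
      Real.log (1 + c * sig t ^ 2) := by
    intro t ht
    obtain ⟨h0, h1⟩ := hsig t ht
    exact log_concave_aux c (sig t ^ 2) hcpos (by positivity)
      (by nlinarith)
  have hsum_nonneg : 0 ≤ ∑ t ∈ Finset.Icc 1 T, sig t :=
    Finset.sum_nonneg fun t ht => (hsig t ht).1.le
  rw [show (2 / Real.log (1 + c)) * T *
        ((1 / 2) * ∑ t ∈ Finset.Icc 1 T, Real.log (1 + c * sig t ^ 2)) =
      T * ((∑ t ∈ Finset.Icc 1 T, Real.log (1 + c * sig t ^ 2)) / Real.log (1 + c)) by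
    field_simp]
  rw [Real.le_sqrt hsum_nonneg]
  swap
  · have : 0 ≤ ∑ t ∈ Finset.Icc 1 T, Real.log (1 + c * sig t ^ 2) :=
      Finset.sum_nonneg fun t ht => Real.log_nonneg (by nlinarith [(hsig t ht).1, sq_nonneg (sig t)])
    positivity
  have hCS : (∑ t ∈ Finset.Icc 1 T, sig t) ^ 2 ≤
      (Finset.Icc 1 T).card * ∑ t ∈ Finset.Icc 1 T, sig t ^ 2 :=
    sq_sum_le_card_mul_sum_sq
  have hcard : ((Finset.Icc 1 T).card : ℝ) = T := by
    rw [Nat.card_Icc]; simp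
  have hsum2 : ∑ t ∈ Finset.Icc 1 T, sig t ^ 2 ≤
      (∑ t ∈ Finset.Icc 1 T, Real.log (1 + c * sig t ^ 2)) / Real.log (1 + c) := by
    rw [le_div_iff₀ hlogpos, Finset.sum_mul]
    exact Finset.sum_le_sum key
  calc (∑ t ∈ Finset.Icc 1 T, sig t) ^ 2
      ≤ (T : ℝ) * ∑ t ∈ Finset.Icc 1 T, sig t ^ 2 := by
        rw [← hcard]; exact_mod_cast hCS
    _ ≤ (T : ℝ) * ((∑ t ∈ Finset.Icc 1 T, Real.log (1 + c * sig t ^ 2)) / Real.log (1 + c)) :=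
        mul_le_mul_of_nonneg_left hsum2 (Nat.cast_nonneg T)
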